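/- For all natural numbers L, M, Σ_{j∈ℤ} (-1)^j q^(j²) [L+M choose L-j]_q [L+1+M choose L+1+j]_q = [L+M choose L]_{q²}. -/

import Mathlib

open LaurentPolynomial Finset

noncomputable section

/-- Gaussian binomial coefficient with natural indices, in base `x`, defined by the
`q`-Pascal recurrence `[n+1, k+1] = [n, k] + x^(k+1) * [n, k+1]`.  It vanishes for `k > n`. -/
def gaussAux (x : LaurentPolynomial ℤ) : ℕ → ℕ → LaurentPolynomial ℤ
  | _, 0 => 1
  | 0, _ + 1 => 0
  | n + 1, k + 1 => gaussAux x n k + x ^ (k + 1) * gaussAux x n (k + 1)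

/-- The Gaussian binomial coefficient `[n choose k]` in base `x`, for integer indices:
it is zero when `n < 0` or `k < 0` (and, by `gaussAux`, also when `k > n`). -/
def qbin (x : LaurentPolynomial ℤ) (n k : ℤ) : LaurentPolynomial ℤ :=
  if 0 ≤ n ∧ 0 ≤ k then gaussAux x n.toNat k.toNat else 0

/-- `(-1)^j` for an integer `j`, as a Laurent polynomial. -/
def m1 (j : ℤ) : LaurentPolynomial ℤ := ((((-1 : ℤˣ) ^ j : ℤˣ) : ℤ) : LaurentPolynomial ℤ)

/-! ### Auxiliary lemmas -/

lemma g0 (x : LaurentPolynomial ℤ) (n : ℕ) : gaussAux x n 0 = 1 := by cases n <;> rfl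

lemma grec (x : LaurentPolynomial ℤ) (n k : ℕ) :
    gaussAux x (n+1) (k+1) = gaussAux x n k + x ^ (k + 1) * gaussAux x n (k + 1) := rfl

lemma gzero (x : LaurentPolynomial ℤ) : ∀ n k : ℕ, n < k → gaussAux x n k = 0 := by
  intro n
  induction n with
  | zero => intro k hk; match k, hk with | k+1, _ => rfl
  | succ n ih =>
    intro k hk
    match k, hk with
    | k+1, hk =>
      rw [grec, ih k (by omega), ih (k+1) (by omega)]
      ring

lemma gdiag (x : LaurentPolynomial ℤ) : ∀ n : ℕ, gaussAux x n n = 1 := by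
  intro n
  induction n with
  | zero => rfl
  | succ n ih => rw [grec, ih, gzero x n (n+1) (by omega)]; ring

lemma grec2 (x : LaurentPolynomial ℤ) : ∀ n k : ℕ,
    gaussAux x (n+1) (k+1) = x ^ (n - k) * gaussAux x n k + gaussAux x n (k+1) := by
  intro n
  induction n with
  | zero =>
    intro k
    match k with
    | 0 => simp [grec, gzero x 0 1 (by omega), g0]
    | k+1 => simp [gzero x 1 (k+2) (by omega), gzero x 0 (k+1) (by omega), gzero x 0 (k+2) (by omega)]
  | succ n ih =>
    intro k
    match k with
    | 0 =>
      conv_lhs => rw [grec x (n+1) 0, ih 0]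
      conv_rhs => rw [grec x n 0]
      simp only [Nat.sub_zero, g0]
      ring
    | k+1 =>
      rcases le_or_gt (k+1) n with h | h
      · conv_lhs => rw [grec x (n+1) (k+1), ih k, ih (k+1)]
        conv_rhs => rw [grec x n k, grec x n (k+1)]
        rw [show n + 1 - (k+1) = n - k by omega, show n - k = n - (k+1) + 1 by omega]
        ring
      · rcases le_or_gt (k+1) (n+1) with h2 | h2
        · have hk : k = n := by omega
          subst hk
          rw [gdiag, gdiag, gzero x (k+1) (k+2) (by omega)]
          simp
        · rw [gzero x (n+2) (k+2) (by omega), gzero x (n+1) (k+1) (by omega),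
            gzero x (n+1) (k+2) (by omega)]
          ring

lemma qbin_nat (x : LaurentPolynomial ℤ) (n k : ℕ) :
    qbin x (n : ℤ) (k : ℤ) = gaussAux x n k := by
  simp [qbin]

lemma qbin_neg_k (x : LaurentPolynomial ℤ) (n k : ℤ) (h : k < 0) : qbin x n k = 0 := by
  simp [qbin]; intros; omega

lemma qbin_gt (x : LaurentPolynomial ℤ) (n k : ℤ) (h : n < k) : qbin x n k = 0 := by
  unfold qbin
  split
  · next hc => exact gzero x _ _ (by omega)
  · rfl

lemma qbin_eq_zero (x : LaurentPolynomial ℤ) (n k : ℤ) (h : k < 0 ∨ n < k) : qbin x n k = 0 := by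
  rcases h with h | h
  · exact qbin_neg_k x n k h
  · exact qbin_gt x n k h

lemma qbin_zero (x : LaurentPolynomial ℤ) (n : ℤ) (h : 0 ≤ n) : qbin x n 0 = 1 := by
  simp [qbin, h, g0]

lemma qbin_diag (x : LaurentPolynomial ℤ) (n : ℤ) (h : 0 ≤ n) : qbin x n n = 1 := by
  simp [qbin, h, gdiag]

lemma P1 (c : ℤ) (n k : ℤ) (hn : 0 ≤ n) :
    qbin (T c) (n+1) k = qbin (T c) n (k-1) + T (c*k) * qbin (T c) n k := by
  lift n to ℕ using hn
  rcases lt_trichotomy k 0 with hk | hk | hk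
  · rw [qbin_neg_k _ _ _ hk, qbin_neg_k _ _ _ (by omega), qbin_neg_k _ _ _ hk]; ring
  · subst hk
    simp [qbin_zero (T c) ((n:ℤ)+1) (by omega), qbin_zero (T c) (n:ℤ) (by omega),
      qbin_neg_k (T c) (n:ℤ) (-1:ℤ) (by omega)]
  · obtain ⟨m, rfl⟩ : ∃ m : ℕ, k = (m : ℤ) + 1 := ⟨(k-1).toNat, by omega⟩
    have h1 : ((n : ℤ) + 1) = ((n + 1 : ℕ) : ℤ) := by push_cast; ring
    have h2 : ((m : ℤ) + 1) = ((m + 1 : ℕ) : ℤ) := by push_cast; ring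
    have h3 : ((m : ℤ) + 1 - 1) = (m : ℤ) := by ring
    rw [h3, h1, h2, qbin_nat, qbin_nat, qbin_nat, grec, T_pow, mul_comm ((m+1:ℕ):ℤ) c]

lemma P2 (c : ℤ) (n k : ℤ) (hn : 0 ≤ n) :
    qbin (T c) (n+1) k = T (c*(n+1-k)) * qbin (T c) n (k-1) + qbin (T c) n k := by
  lift n to ℕ using hn
  rcases lt_trichotomy k 0 with hk | hk | hk
  · rw [qbin_neg_k _ _ _ hk, qbin_neg_k _ _ _ (by omega), qbin_neg_k _ _ _ hk]; ring
  · subst hk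
    simp [qbin_zero (T c) ((n:ℤ)+1) (by omega), qbin_zero (T c) (n:ℤ) (by omega),
      qbin_neg_k (T c) (n:ℤ) (-1:ℤ) (by omega)]
  · obtain ⟨m, rfl⟩ : ∃ m : ℕ, k = (m : ℤ) + 1 := ⟨(k-1).toNat, by omega⟩
    rcases le_or_gt (m : ℤ) (n : ℤ) with h | h
    · have h1 : ((n : ℤ) + 1) = ((n + 1 : ℕ) : ℤ) := by push_cast; ring
      have h2 : ((m : ℤ) + 1) = ((m + 1 : ℕ) : ℤ) := by push_cast; ring
      have h3 : ((m : ℤ) + 1 - 1) = (m : ℤ) := by ring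
      have h5 : ((n - m : ℕ) : ℤ) = (n:ℤ)+1-((m:ℤ)+1) := by omega
      rw [← h5, h3, h1, h2, qbin_nat, qbin_nat, qbin_nat, grec2, T_pow,
        mul_comm ((n-m:ℕ):ℤ) c]
    · rw [qbin_gt _ _ _ (by omega), qbin_gt _ _ _ (by omega), qbin_gt _ _ _ (by omega)]
      ring

lemma m1_zero : m1 0 = 1 := by simp [m1]

lemma m1_neg (j : ℤ) : m1 (-j) = m1 j := by
  unfold m1; rw [zpow_neg, Int.units_inv_eq_self]

lemma m1_add_one (j : ℤ) : m1 (j+1) = -m1 j := by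
  unfold m1; rw [zpow_add_one, mul_neg_one]; push_cast; ring

lemma m1_neg_one_sub (j : ℤ) : m1 (-1-j) = -m1 j := by
  rw [show (-1-j : ℤ) = -(j+1) by ring, m1_neg, m1_add_one]

lemma m1_one_sub (j : ℤ) : m1 (1-j) = -m1 j := by
  rw [show (1-j : ℤ) = -j+1 by ring, m1_add_one, m1_neg]

lemma eq_zero_of_eq_neg' (a : LaurentPolynomial ℤ) (h : a = -a) : a = 0 := by
  have h2 : (2 : LaurentPolynomial ℤ) * a = 0 := by linear_combination h
  rcases mul_eq_zero.mp h2 with h3 | h3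
  · exfalso
    have h4 : Polynomial.toLaurent (2 : Polynomial ℤ) = 0 := by
      rw [map_ofNat]
      exact_mod_cast h3
    rw [Polynomial.toLaurent_eq_zero] at h4
    norm_num at h4
  · exact h3

/-- A sum over `ℤ` of a function which is odd with respect to some permutation vanishes. -/
lemma finsum_eq_zero_of_invol (f : ℤ → LaurentPolynomial ℤ) (g : Equiv.Perm ℤ)
    (h : ∀ j, f (g j) = - f j) : ∑ᶠ j : ℤ, f j = 0 := by
  apply eq_zero_of_eq_neg'
  calc ∑ᶠ j : ℤ, f j = ∑ᶠ j : ℤ, f (g j) := (finsum_comp_equiv g).symm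
    _ = ∑ᶠ j : ℤ, -f j := by exact finsum_congr h
    _ = -∑ᶠ j : ℤ, f j := finsum_neg_distrib f

/-- Support-finiteness helper. -/
lemma supp_fin {f : ℤ → LaurentPolynomial ℤ} (a b : ℤ) (h : ∀ j, j < a ∨ b < j → f j = 0) :
    (Function.support f).Finite := by
  apply Set.Finite.subset (Set.finite_Icc a b)
  intro j hj
  rw [Set.mem_Icc]
  by_contra hc
  push_neg at hc
  exact hj (h j (by omega))

/-- The symmetric sum `W`. -/
def Wf (n l : ℤ) (j : ℤ) : LaurentPolynomial ℤ :=
  m1 j * T (j^2) * qbin (T 1) n (l - j) * qbin (T 1) n (l + j)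

def Wsum (n l : ℤ) : LaurentPolynomial ℤ := ∑ᶠ j : ℤ, Wf n l j

lemma Wf_fin (n l : ℤ) : (Function.support (Wf n l)).Finite := by
  apply supp_fin (l - n) l
  intro j hj
  unfold Wf
  rcases hj with h | h
  · rw [qbin_eq_zero (T 1) n (l - j) (by omega)]; ring
  · rw [qbin_eq_zero (T 1) n (l - j) (by omega)]; ring

/-- Base case `M = 0`, i.e. `l = n`. -/
lemma Wbase_diag (n : ℤ) (hn : 0 ≤ n) : Wsum n n = 1 := by
  unfold Wsum
  rw [finsum_eq_single _ 0]
  · unfold Wf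
    rw [show n - 0 = n by ring, show n + 0 = n by ring, m1_zero, qbin_diag (T 1) n hn]
    norm_num
  · intro j hj
    unfold Wf
    rcases lt_or_gt_of_ne hj with h | h
    · rw [qbin_eq_zero (T 1) n (n - j) (by omega)]; ring
    · rw [qbin_eq_zero (T 1) n (n + j) (by omega)]; ring

/-- Base case `L = 0`, i.e. `l = 0`. -/
lemma Wbase_zero (n : ℤ) (hn : 0 ≤ n) : Wsum n 0 = 1 := by
  unfold Wsum
  rw [finsum_eq_single _ 0]
  · unfold Wf
    norm_num [m1_zero, qbin_zero (T 1) n hn]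
  · intro j hj
    unfold Wf
    rcases lt_or_gt_of_ne hj with h | h
    · rw [qbin_eq_zero (T 1) n (0 + j) (by omega)]; ring
    · rw [qbin_eq_zero (T 1) n (0 - j) (by omega)]; ring

/-- Pointwise Pascal decomposition of the summand of `Wsum (n+1) (l+1)`. -/
lemma Wkey (n l j : ℤ) (hn : 0 ≤ n) :
    Wf (n+1) (l+1) j =
    (T (2*(n-l)) * Wf n l j + Wf n (l+1) j)
    + (m1 j * T (j^2 + (n-l) + j) * qbin (T 1) n (l-j) * qbin (T 1) n (l+1+j)
      + m1 j * T (j^2 + (n-l) - j) * qbin (T 1) n (l+1-j) * qbin (T 1) n (l+j)) := by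
  unfold Wf
  rw [show (l + 1 - j : ℤ) = (l - j) + 1 by ring, show (l + 1 + j : ℤ) = (l + j) + 1 by ring,
    P2 1 n ((l-j)+1) hn, P2 1 n ((l+j)+1) hn,
    show ((l-j)+1-1 : ℤ) = l - j by ring, show ((l+j)+1-1 : ℤ) = l + j by ring,
    show (1*(n+1-((l-j)+1)) : ℤ) = (n-l) + j by ring,
    show (1*(n+1-((l+j)+1)) : ℤ) = (n-l) + (-j) by ring,
    show (2*(n-l) : ℤ) = (n-l) + (n-l) by ring,
    show (j^2 + (n-l) + j : ℤ) = j^2 + ((n-l) + j) by ring,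
    show (j^2 + (n-l) - j : ℤ) = j^2 + ((n-l) + (-j)) by ring,
    T_add, T_add, T_add, T_add, T_add, T_add, T_add]
  have hbc : T (j : ℤ) * T (-j) = (1 : LaurentPolynomial ℤ) := by
    rw [← T_add]; simp
  linear_combination (m1 j * T (j^2) * T (n-l) * T (n-l) *
    qbin (T 1) n (l-j) * qbin (T 1) n (l+j)) * hbc

/-- The recurrence for `Wsum`. -/
lemma Wrec (n l : ℤ) (hn : 0 ≤ n) :
    Wsum (n+1) (l+1) = T (2*(n-l)) * Wsum n l + Wsum n (l+1) := by
  have hB : (Function.support fun j : ℤ =>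
      m1 j * T (j^2 + (n-l) + j) * qbin (T 1) n (l-j) * qbin (T 1) n (l+1+j)).Finite := by
    apply supp_fin (l - n) l
    intro j hj
    rcases hj with h | h
    · rw [qbin_eq_zero (T 1) n (l - j) (by omega)]; ring
    · rw [qbin_eq_zero (T 1) n (l - j) (by omega)]; ring
  have hC : (Function.support fun j : ℤ =>
      m1 j * T (j^2 + (n-l) - j) * qbin (T 1) n (l+1-j) * qbin (T 1) n (l+j)).Finite := by
    apply supp_fin (l + 1 - n) (l + 1)
    intro j hj
    rcases hj with h | h
    · rw [qbin_eq_zero (T 1) n (l + 1 - j) (by omega)]; ring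
    · rw [qbin_eq_zero (T 1) n (l + 1 - j) (by omega)]; ring
  have hA : (Function.support fun j : ℤ => T (2*(n-l)) * Wf n l j).Finite :=
    Set.Finite.subset (Wf_fin n l) (by
      intro j hj
      simp only [Function.mem_support] at hj ⊢
      intro h0
      rw [h0, mul_zero] at hj
      exact hj rfl)
  have hD := Wf_fin n (l+1)
  calc Wsum (n+1) (l+1)
      = ∑ᶠ j : ℤ, ((T (2*(n-l)) * Wf n l j + Wf n (l+1) j)
        + (m1 j * T (j^2 + (n-l) + j) * qbin (T 1) n (l-j) * qbin (T 1) n (l+1+j)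
          + m1 j * T (j^2 + (n-l) - j) * qbin (T 1) n (l+1-j) * qbin (T 1) n (l+j))) := by
        exact finsum_congr fun j => Wkey n l j hn
    _ = (∑ᶠ j : ℤ, (T (2*(n-l)) * Wf n l j + Wf n (l+1) j))
        + (∑ᶠ j : ℤ, (m1 j * T (j^2 + (n-l) + j) * qbin (T 1) n (l-j) * qbin (T 1) n (l+1+j)
          + m1 j * T (j^2 + (n-l) - j) * qbin (T 1) n (l+1-j) * qbin (T 1) n (l+j))) := by
        apply finsum_add_distrib
        · exact Set.Finite.subset (hA.union hD) (Function.support_add _ _)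
        · exact Set.Finite.subset (hB.union hC) (Function.support_add _ _)
    _ = T (2*(n-l)) * Wsum n l + Wsum n (l+1) := by
        rw [finsum_add_distrib hA hD, finsum_add_distrib hB hC]
        have hBzero : (∑ᶠ j : ℤ, m1 j * T (j^2 + (n-l) + j) * qbin (T 1) n (l-j)
            * qbin (T 1) n (l+1+j)) = 0 := by
          apply finsum_eq_zero_of_invol _
            (Function.Involutive.toPerm (fun j : ℤ => -1-j) (show Function.Involutive (fun j : ℤ => -1-j) from fun j => by ring))
          intro j
          simp only [Function.Involutive.coe_toPerm]
          rw [m1_neg_one_sub, show ((-1-j)^2 + (n-l) + (-1-j) : ℤ) = j^2 + (n-l) + j by ring,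
            show (l - (-1-j) : ℤ) = l+1+j by ring, show (l+1+(-1-j) : ℤ) = l - j by ring]
          ring
        have hCzero : (∑ᶠ j : ℤ, m1 j * T (j^2 + (n-l) - j) * qbin (T 1) n (l+1-j)
            * qbin (T 1) n (l+j)) = 0 := by
          apply finsum_eq_zero_of_invol _
            (Function.Involutive.toPerm (fun j : ℤ => 1-j) (show Function.Involutive (fun j : ℤ => 1-j) from fun j => by ring))
          intro j
          simp only [Function.Involutive.coe_toPerm]
          rw [m1_one_sub, show ((1-j)^2 + (n-l) - (1-j) : ℤ) = j^2 + (n-l) - j by ring,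
            show (l + 1 - (1-j) : ℤ) = l+j by ring, show (l+(1-j) : ℤ) = l + 1 - j by ring]
          ring
        rw [hBzero, hCzero, add_zero, add_zero, Wsum, Wsum, ← mul_finsum _ _]

/-- The symmetric sum equals the `q²`-binomial coefficient. -/
lemma Wmain : ∀ N L M : ℕ, L + M ≤ N →
    Wsum ((L:ℤ) + M) L = qbin (T 2) ((L:ℤ) + M) L := by
  intro N
  induction N with
  | zero =>
    intro L M h
    have hL : L = 0 := by omega
    have hM : M = 0 := by omega
    subst hL; subst hM
    norm_num
    rw [Wbase_zero 0 le_rfl, qbin_zero (T 2) 0 le_rfl]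
  | succ N ih =>
    intro L M h
    rcases Nat.eq_zero_or_pos L with hL | hL
    · subst hL
      norm_num
      rw [Wbase_zero (M:ℤ) (by positivity), qbin_zero (T 2) (M:ℤ) (by positivity)]
    rcases Nat.eq_zero_or_pos M with hM | hM
    · subst hM
      norm_num
      rw [Wbase_diag (L:ℤ) (by positivity), qbin_diag (T 2) (L:ℤ) (by positivity)]
    obtain ⟨L', rfl⟩ : ∃ L', L = L' + 1 := ⟨L - 1, by omega⟩
    obtain ⟨M', rfl⟩ : ∃ M', M = M' + 1 := ⟨M - 1, by omega⟩
    have e1 : ((L' + 1 : ℕ) : ℤ) + ((M' + 1 : ℕ) : ℤ) = ((L':ℤ) + (M':ℤ) + 1) + 1 := by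
      push_cast; ring
    have e2 : ((L' + 1 : ℕ) : ℤ) = (L' : ℤ) + 1 := by push_cast; ring
    rw [e1, e2, Wrec ((L':ℤ) + (M':ℤ) + 1) (L':ℤ) (by positivity),
      P2 2 ((L':ℤ) + (M':ℤ) + 1) ((L':ℤ) + 1) (by positivity)]
    have ih1 := ih L' (M'+1) (by omega)
    have ih2 := ih (L'+1) M' (by omega)
    push_cast at ih1 ih2
    rw [show ((L':ℤ) + ((M':ℤ)+1)) = (L':ℤ) + (M':ℤ) + 1 by ring] at ih1
    rw [show ((L':ℤ) + 1 + (M':ℤ)) = (L':ℤ) + (M':ℤ) + 1 by ring] at ih2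
    rw [ih1, ih2, show ((L':ℤ) + 1 - 1) = (L' : ℤ) by ring,
      show (2*((L':ℤ) + (M':ℤ) + 1 + 1 - ((L':ℤ)+1))) = 2*(((L':ℤ) + (M':ℤ) + 1) - (L':ℤ)) by ring]

theorem stmt13 (L M : ℕ) :
    (∑ᶠ j : ℤ, m1 j * T (j ^ 2) *
        qbin (T 1) (L + M) (L - j) * qbin (T 1) ((L : ℤ) + 1 + M) ((L : ℤ) + 1 + j)) =
      qbin (T 2) (L + M) L := by
  have hn : (0 : ℤ) ≤ (L:ℤ) + M := by positivity
  have key : ∀ j : ℤ, m1 j * T (j ^ 2) *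
      qbin (T 1) ((L:ℤ) + M) ((L:ℤ) - j) * qbin (T 1) ((L : ℤ) + 1 + M) ((L : ℤ) + 1 + j)
      = Wf ((L:ℤ)+M) L j
        + m1 j * T (j^2 + ((L:ℤ)+1+j)) * qbin (T 1) ((L:ℤ)+M) ((L:ℤ)-j)
          * qbin (T 1) ((L:ℤ)+M) ((L:ℤ)+1+j) := by
    intro j
    rw [show ((L:ℤ) + 1 + M) = ((L:ℤ) + M) + 1 by ring,
      P1 1 ((L:ℤ)+M) ((L:ℤ)+1+j) hn,
      show ((L:ℤ)+1+j-1) = (L:ℤ) + j by ring,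
      show (1*((L:ℤ)+1+j)) = (L:ℤ)+1+j by ring,
      T_add (j^2) ((L:ℤ)+1+j)]
    unfold Wf
    ring
  rw [finsum_congr key]
  have hV : (Function.support fun j : ℤ => m1 j * T (j^2 + ((L:ℤ)+1+j))
      * qbin (T 1) ((L:ℤ)+M) ((L:ℤ)-j) * qbin (T 1) ((L:ℤ)+M) ((L:ℤ)+1+j)).Finite := by
    apply supp_fin ((L:ℤ) - ((L:ℤ)+M)) (L:ℤ)
    intro j hj
    rcases hj with h | h
    · rw [qbin_eq_zero (T 1) ((L:ℤ)+M) ((L:ℤ) - j) (by omega)]; ring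
    · rw [qbin_eq_zero (T 1) ((L:ℤ)+M) ((L:ℤ) - j) (by omega)]; ring
  rw [finsum_add_distrib (Wf_fin ((L:ℤ)+M) L) hV]
  have hVzero : (∑ᶠ j : ℤ, m1 j * T (j^2 + ((L:ℤ)+1+j))
      * qbin (T 1) ((L:ℤ)+M) ((L:ℤ)-j) * qbin (T 1) ((L:ℤ)+M) ((L:ℤ)+1+j)) = 0 := by
    apply finsum_eq_zero_of_invol _
      (Function.Involutive.toPerm (fun j : ℤ => -1-j) (show Function.Involutive (fun j : ℤ => -1-j) from fun j => by ring))
    intro j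
    simp only [Function.Involutive.coe_toPerm]
    rw [m1_neg_one_sub, show ((-1-j)^2 + ((L:ℤ)+1+(-1-j))) = j^2 + ((L:ℤ)+1+j) by ring,
      show ((L:ℤ) - (-1-j)) = (L:ℤ)+1+j by ring, show ((L:ℤ)+1+(-1-j)) = (L:ℤ) - j by ring]
    ring
  rw [hVzero, add_zero]
  exact Wmain (L+M) L M le_rfl
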